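/- Let d ≥ 3 and let W_d ∈ Sym_d(ℝ²) be d times the symmetrization of e₁^{⊗(d-1)}⊗e₂ (i.e., the sum over all d placements of e₂ among copies of e₁). Then ‖W_d‖_F² = d and ‖W_d‖_σ² / ‖W_d‖_F² = (1 - 1/d)^{d-1}, where ‖W_d‖_σ = max_{‖w‖=1} |⟨W_d, w^{⊗d}⟩_F|. -/

import Mathlib

/-- The tensor `W_d = d·e₁^{d-1}e₂`, i.e. the sum over all `d` placements of `e₂`
among copies of `e₁`: its entry at a multi-index `i` is `1` if exactly one coordinate
of `i` equals `1`, and `0` otherwise. -/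
noncomputable def Wd (d : ℕ) : (Fin d → Fin 2) → ℝ :=
  fun i => if (Finset.univ.filter fun k => i k = 1).card = 1 then 1 else 0

/-- The basis multi-index with a single `1` at position `k`. -/
def eVec (d : ℕ) (k : Fin d) : Fin d → Fin 2 := fun j => if j = k then 1 else 0

lemma eVec_inj (d : ℕ) : Function.Injective (eVec d) := by
  intro k k' h
  by_contra hkk
  have h1 : eVec d k k = eVec d k' k := congrFun h k
  simp only [eVec, if_pos rfl, if_neg hkk] at h1
  exact absurd h1 (by decide)

lemma filter_eq_image (d : ℕ) :
    (Finset.univ.filter fun i : Fin d → Fin 2 =>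
        (Finset.univ.filter fun k => i k = 1).card = 1) =
      Finset.image (eVec d) Finset.univ := by
  ext i
  simp only [Finset.mem_filter, Finset.mem_image, Finset.mem_univ, true_and]
  constructor
  · intro h
    obtain ⟨k, hk⟩ := Finset.card_eq_one.mp h
    refine ⟨k, ?_⟩
    have hiff : ∀ j, i j = 1 ↔ j = k := by
      intro j
      have := Finset.ext_iff.mp hk j
      simpa using this
    funext j
    by_cases hj : j = k
    · simp [eVec, hj, (hiff k).mpr rfl]
    · have h1 : i j ≠ 1 := fun hh => hj ((hiff j).mp hh)
      have h0 : i j = 0 := by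
        have h2 := (i j).isLt
        have h3 : (i j).val ≠ 1 := fun hv => h1 (Fin.ext hv)
        exact Fin.ext (by omega)
      simp [eVec, hj, h0]
  · rintro ⟨k, rfl⟩
    have heq : (Finset.univ.filter fun j => eVec d k j = 1) = {k} := by
      ext j
      simp only [Finset.mem_filter, Finset.mem_univ, true_and, Finset.mem_singleton, eVec]
      by_cases hj : j = k <;> simp [hj]
    rw [heq, Finset.card_singleton]

lemma sum_sq_Wd (d : ℕ) : ∑ i : Fin d → Fin 2, Wd d i ^ 2 = d := by
  have h1 : ∀ i : Fin d → Fin 2, Wd d i ^ 2 =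
      if (Finset.univ.filter fun k => i k = 1).card = 1 then (1:ℝ) else 0 := by
    intro i; unfold Wd; split <;> norm_num
  rw [Finset.sum_congr rfl fun i _ => h1 i, ← Finset.sum_filter,
    filter_eq_image d, Finset.sum_const,
    Finset.card_image_of_injective _ (eVec_inj d)]
  simp

lemma sum_Wd_prod (d : ℕ) (hd : 1 ≤ d) (w : Fin 2 → ℝ) :
    ∑ i : Fin d → Fin 2, Wd d i * ∏ k : Fin d, w (i k)
      = d * w 1 * w 0 ^ (d - 1) := by
  have h1 : ∀ i : Fin d → Fin 2, Wd d i * ∏ k : Fin d, w (i k) =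
      if (Finset.univ.filter fun k => i k = 1).card = 1 then ∏ k : Fin d, w (i k) else 0 := by
    intro i; unfold Wd; split <;> simp
  rw [Finset.sum_congr rfl fun i _ => h1 i, ← Finset.sum_filter,
    filter_eq_image d, Finset.sum_image (fun a _ b _ h => eVec_inj d h)]
  have h2 : ∀ k : Fin d, ∏ j : Fin d, w (eVec d k j) = w 1 * w 0 ^ (d - 1) := by
    intro k
    have hrw : ∀ j : Fin d, w (eVec d k j) = Function.update (fun _ : Fin d => w 0) k (w 1) j := by
      intro j
      rw [Function.update_apply]
      by_cases hj : j = k <;> simp [eVec, hj]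
    rw [Finset.prod_congr rfl fun j _ => hrw j,
      Finset.prod_update_of_mem (Finset.mem_univ k), Finset.prod_const,
      Finset.card_sdiff_of_subset (Finset.subset_univ _), Finset.card_singleton,
      Finset.card_univ, Fintype.card_fin]
  rw [Finset.sum_congr rfl fun k _ => h2 k, Finset.sum_const]
  simp [mul_assoc]

lemma amgm_key (d : ℕ) (hd : 3 ≤ d) (a b : ℝ) (ha : 0 ≤ a) (hb : 0 ≤ b) (hab : a + b = 1) :
    a ^ (d - 1) * b ≤ (1 - 1 / (d:ℝ)) ^ (d - 1) * (1 / d) := by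
  set n : ℕ := d - 1 with hn
  have hd0 : (0:ℝ) < d := by positivity
  have hn0 : (0:ℝ) < n := by
    have h2 : (1:ℕ) ≤ n := by omega
    exact_mod_cast Nat.lt_of_lt_of_le Nat.zero_lt_one h2
  have hdne : (d:ℝ) ≠ 0 := ne_of_gt hd0
  have hnne : (n:ℝ) ≠ 0 := ne_of_gt hn0
  have hnd : (n:ℝ) = (d:ℝ) - 1 := by
    have h3 : n + 1 = d := by omega
    push_cast [← h3]; ring
  set p₁ : ℝ := a * d / n with hp₁def
  set p₂ : ℝ := b * d with hp₂def
  have hp₁ : 0 ≤ p₁ := by positivity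
  have hp₂ : 0 ≤ p₂ := by positivity
  have hw₁ : (0:ℝ) ≤ n / d := by positivity
  have hw₂ : (0:ℝ) ≤ 1 / d := by positivity
  have hwsum : (n:ℝ)/d + 1/d = 1 := by
    rw [hnd]; field_simp; ring
  have hgm := Real.geom_mean_le_arith_mean2_weighted hw₁ hw₂ hp₁ hp₂ hwsum
  have hrhs : (n:ℝ)/d * p₁ + 1/d * p₂ = 1 := by
    rw [hp₁def, hp₂def]
    field_simp
    linear_combination hab
  rw [hrhs] at hgm
  have hx0 : 0 ≤ p₁ ^ ((n:ℝ)/d) * p₂ ^ ((1:ℝ)/d) :=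
    mul_nonneg (Real.rpow_nonneg hp₁ _) (Real.rpow_nonneg hp₂ _)
  have hpow : (p₁ ^ ((n:ℝ)/d) * p₂ ^ ((1:ℝ)/d)) ^ d ≤ 1 := pow_le_one₀ hx0 hgm
  have hcalc : (p₁ ^ ((n:ℝ)/d) * p₂ ^ ((1:ℝ)/d)) ^ d = p₁ ^ n * p₂ := by
    rw [mul_pow, ← Real.rpow_natCast (p₁ ^ ((n:ℝ)/d)) d, ← Real.rpow_natCast (p₂ ^ ((1:ℝ)/d)) d,
      ← Real.rpow_mul hp₁, ← Real.rpow_mul hp₂]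
    rw [div_mul_cancel₀ _ hdne, div_mul_cancel₀ _ hdne]
    rw [Real.rpow_natCast, Real.rpow_one]
  rw [hcalc] at hpow
  have hkey : a ^ n * b = (p₁ ^ n * p₂) * (((n:ℝ)/d) ^ n * (1/d)) := by
    rw [hp₁def, hp₂def, div_pow, div_pow, mul_pow]
    field_simp
  have h1d : (n:ℝ)/d = 1 - 1/(d:ℝ) := by rw [hnd]; field_simp
  rw [hkey]
  calc (p₁ ^ n * p₂) * (((n:ℝ)/d) ^ n * (1/d))
      ≤ 1 * (((n:ℝ)/d) ^ n * (1/d)) := by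
        apply mul_le_mul_of_nonneg_right hpow; positivity
    _ = (1 - 1/(d:ℝ)) ^ n * (1/d) := by rw [one_mul, h1d]

theorem Wd_norms (d : ℕ) (hd : 3 ≤ d) :
    (∑ i : Fin d → Fin 2, Wd d i ^ 2 = d) ∧
    (sSup {z : ℝ | ∃ w : Fin 2 → ℝ, w 0 ^ 2 + w 1 ^ 2 = 1 ∧
        z = |∑ i : Fin d → Fin 2, Wd d i * ∏ k : Fin d, w (i k)|}) ^ 2 /
      (∑ i : Fin d → Fin 2, Wd d i ^ 2) = (1 - 1 / (d : ℝ)) ^ (d - 1) := by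
  have hd0 : (0:ℝ) < d := by positivity
  have hc0 : (0:ℝ) ≤ 1 - 1/(d:ℝ) := by
    rw [sub_nonneg, div_le_one hd0]
    have h1 : (1:ℕ) ≤ d := by omega
    exact_mod_cast h1
  have hdd : (d:ℝ)^2 * (1/d) = d := by field_simp
  refine ⟨sum_sq_Wd d, ?_⟩
  set M : ℝ := Real.sqrt ((d:ℝ) * (1 - 1/(d:ℝ)) ^ (d - 1)) with hM
  have hMsq : M ^ 2 = (d:ℝ) * (1 - 1/(d:ℝ)) ^ (d - 1) := by
    rw [hM, Real.sq_sqrt (by positivity)]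
  have hgreat : IsGreatest {z : ℝ | ∃ w : Fin 2 → ℝ, w 0 ^ 2 + w 1 ^ 2 = 1 ∧
      z = |∑ i : Fin d → Fin 2, Wd d i * ∏ k : Fin d, w (i k)|} M := by
    constructor
    · -- M is attained
      refine ⟨![Real.sqrt (1 - 1/(d:ℝ)), Real.sqrt (1/(d:ℝ))], ?_, ?_⟩
      · simp only [Matrix.cons_val_zero, Matrix.cons_val_one, Matrix.head_cons]
        rw [Real.sq_sqrt hc0, Real.sq_sqrt (by positivity)]
        ring
      · rw [sum_Wd_prod d (by omega)]
        simp only [Matrix.cons_val_zero, Matrix.cons_val_one, Matrix.head_cons]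
        have hval : ((d:ℝ) * Real.sqrt (1/(d:ℝ)) * (Real.sqrt (1 - 1/(d:ℝ))) ^ (d-1)) ^ 2
            = (d:ℝ) * (1 - 1/(d:ℝ)) ^ (d - 1) := by
          rw [mul_pow, mul_pow, ← pow_mul, mul_comm (d-1) 2, pow_mul,
            Real.sq_sqrt hc0, Real.sq_sqrt (by positivity : (0:ℝ) ≤ 1/(d:ℝ))]
          rw [mul_assoc, ← mul_assoc ((d:ℝ)^2), hdd]
        rw [← Real.sqrt_sq_eq_abs, hval]
    · rintro z ⟨w, hw, rfl⟩
      rw [sum_Wd_prod d (by omega)]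
      have hk := amgm_key d hd (w 0 ^ 2) (w 1 ^ 2) (sq_nonneg _) (sq_nonneg _) hw
      have hsq : |(d:ℝ) * w 1 * w 0 ^ (d-1)| ^ 2 ≤ M ^ 2 := by
        rw [sq_abs, hMsq, mul_pow, mul_pow, ← pow_mul, mul_comm (d-1) 2, pow_mul]
        calc (d:ℝ)^2 * w 1 ^ 2 * (w 0 ^ 2) ^ (d-1)
            = (d:ℝ)^2 * ((w 0 ^ 2) ^ (d-1) * w 1 ^ 2) := by ring
          _ ≤ (d:ℝ)^2 * ((1 - 1/(d:ℝ)) ^ (d-1) * (1/d)) := by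
              apply mul_le_mul_of_nonneg_left hk; positivity
          _ = (d:ℝ) * (1 - 1/(d:ℝ)) ^ (d-1) := by
              rw [mul_comm ((1 - 1/(d:ℝ)) ^ (d-1)) (1/(d:ℝ)), ← mul_assoc, hdd]
      have hM0 : 0 ≤ M := Real.sqrt_nonneg _
      have hfin := Real.sqrt_le_sqrt hsq
      rwa [Real.sqrt_sq (abs_nonneg _), Real.sqrt_sq hM0] at hfin
  rw [hgreat.csSup_eq, sum_sq_Wd d, hMsq, mul_div_cancel_left₀ _ (ne_of_gt hd0)]
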